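/- Let L be a local field of mixed characteristic (0,p). The natural map H^1(R_{ℚ_p}(2)) → H^1(R_L(2)) on (φ,Γ)-cohomology is injective. Concretely: if f = Σ_{i∈ℤ} a_i T^i ∈ R_L satisfies that both (χ(γ)^2 γ − 1)f and (p^2 φ − 1)f have coefficients in ℚ_p, in particular if (p^2 φ − 1)f ∈ R_{ℚ_p}, then f ∈ R_{ℚ_p}. -/

import Mathlib

open scoped NNReal ENNReal

/-!
STATEMENT 15: Let `L` be a local field of mixed characteristic `(0,p)`.  The natural map
`H¹(R_{ℚ_p}(2)) → H¹(R_L(2))` is injective.  Concretely: if `f = Σ a_i T^i ∈ R_L` is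
such that `(p²φ − 1)f` has all coefficients in `ℚ_p` (in particular if
`(p²φ − 1)f ∈ R_{ℚ_p}`), then `f ∈ R_{ℚ_p}`.

Laurent series are represented by coefficient functions `ℤ → L`; `ℚ_p ⊆ L` is modelled
as a closed subfield `K0`, and the Frobenius `φ(T) = (1+T)^p − 1` is pinned down
concretely through the convolution powers `SP i` of the coefficient sequence `S` of
`(1+T)^p − 1` (which have coefficients in `K0`): `(φ f)_k = Σ_i f_i (S^i)_k`.
-/

variable {L : Type*} [NontriviallyNormedField L]

/-- `f ∈ R_L`: convergence on some annulus `ρ₀ ≤ |T| < 1`. -/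
def MemRobba (f : ℤ → L) : Prop :=
  ∃ ρ₀ ∈ Set.Ioo (0 : ℝ≥0) 1, ∀ ρ ∈ Set.Ico ρ₀ (1 : ℝ≥0),
    Filter.Tendsto (fun i : ℤ => (‖f i‖₊ * ρ ^ i : ℝ≥0)) Filter.cofinite (nhds 0)

/-- `h = u·v` (convolution product of Laurent series). -/
def IsLaurentMul (u v h : ℤ → L) : Prop :=
  ∀ i : ℤ, HasSum (fun j : ℤ => u j * v (i - j)) (h i)

/-- The Laurent series `1`. -/
def laurentOne : ℤ → L := fun i => if i = 0 then 1 else 0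

/-- The coefficients of `S = φ(T) = (1+T)^p − 1`. -/
noncomputable def frobT (p : ℕ) : ℤ → L :=
  fun i => if 1 ≤ i ∧ i ≤ (p : ℤ) then ((p.choose i.toNat : ℕ) : L) else 0

lemma frobT_eq_zero {p : ℕ} {k : ℤ} (h : k < 1 ∨ (p : ℤ) < k) : frobT (L := L) p k = 0 := by
  unfold frobT
  rw [if_neg]
  rintro ⟨h1, h2⟩
  rcases h with h | h <;> omega

lemma frobT_self {p : ℕ} (hp : 1 ≤ p) : frobT (L := L) p p = 1 := by
  unfold frobT
  rw [if_pos ⟨by exact_mod_cast hp, le_refl _⟩]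
  simp [Int.toNat_natCast]

lemma frobT_one {p : ℕ} (hp : 1 ≤ p) : frobT (L := L) p 1 = (p : L) := by
  unfold frobT
  rw [if_pos ⟨le_refl _, by exact_mod_cast hp⟩]
  simp

lemma norm_frobT_le [IsUltrametricDist L] {p : ℕ} (hp : p.Prime) {k : ℤ}
    (hk : k ≠ (p : ℤ)) : ‖frobT (L := L) p k‖₊ ≤ ‖(p : L)‖₊ := by
  unfold frobT
  split_ifs with h
  · obtain ⟨h1, h2⟩ := h
    have hk1 : k.toNat ≠ 0 := by omega
    have hk2 : k.toNat < p := by omega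
    obtain ⟨t, ht⟩ := hp.dvd_choose_self hk1 hk2
    rw [ht]
    push_cast
    rw [nnnorm_mul]
    calc ‖(p : L)‖₊ * ‖(t : L)‖₊ ≤ ‖(p : L)‖₊ * 1 :=
          mul_le_mul_right (IsUltrametricDist.nnnorm_natCast_le_one L t) _
      _ = ‖(p : L)‖₊ := mul_one _
  · simp

lemma vanish_aux [IsUltrametricDist L] [CharZero L]
    (p : ℕ) (hp : p.Prime) (hpL : ‖(p : L)‖ < 1)
    (u h : ℤ → L) (hu : MemRobba u) (hmul : IsLaurentMul u (frobT p) h)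
    (c : ℤ) (hh : ∀ k, c < k → h k = 0) :
    ∀ k, c - p < k → u k = 0 := by
  obtain ⟨ρ₀, ⟨hρ₀0, hρ₀1⟩, hconv⟩ := hu
  have hp2 : 2 ≤ p := hp.two_le
  set a : ℝ≥0 := ‖(p : L)‖₊ with ha_def
  have ha1 : a < 1 := by exact_mod_cast hpL
  have ha0 : 0 < a := by
    simp only [ha_def, nnnorm_pos]
    exact_mod_cast hp.ne_zero
  set ρ : ℝ≥0 := max ρ₀ (a ^ ((p : ℝ)⁻¹)) with hρ_def
  have hρ1 : ρ < 1 :=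
    max_lt hρ₀1 (NNReal.rpow_lt_one ha1 (by positivity))
  have hρ0 : 0 < ρ := lt_of_lt_of_le hρ₀0 (le_max_left _ _)
  have hkey : a < ρ ^ ((p : ℤ) - 1) := by
    have h1 : a ^ ((p : ℝ)⁻¹) ≤ ρ := le_max_right _ _
    have h2 : (a ^ ((p : ℝ)⁻¹)) ^ (p - 1 : ℕ) ≤ ρ ^ (p - 1 : ℕ) :=
      pow_le_pow_left' h1 _
    have h3 : (a ^ ((p : ℝ)⁻¹)) ^ (p - 1 : ℕ) = a ^ ((p : ℝ)⁻¹ * (p - 1 : ℕ)) := by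
      rw [← NNReal.rpow_natCast (a ^ ((p : ℝ)⁻¹)), ← NNReal.rpow_mul]
    have h4 : a < a ^ ((p : ℝ)⁻¹ * (p - 1 : ℕ)) := by
      nth_rewrite 1 [← NNReal.rpow_one a]
      apply NNReal.rpow_lt_rpow_of_exponent_gt ha0 ha1
      rw [inv_mul_lt_iff₀ (by positivity), mul_one]
      exact_mod_cast Nat.sub_lt (by omega) one_pos
    have h5 : (ρ : ℝ≥0) ^ ((p : ℤ) - 1) = ρ ^ (p - 1 : ℕ) := by
      rw [← zpow_natCast]
      congr 1
      omega
    rw [h5]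
    calc a < a ^ ((p : ℝ)⁻¹ * (p - 1 : ℕ)) := h4
      _ = (a ^ ((p : ℝ)⁻¹)) ^ (p - 1 : ℕ) := h3.symm
      _ ≤ ρ ^ (p - 1 : ℕ) := h2
  have htends := hconv ρ ⟨le_max_left _ _, hρ1⟩
  set g : ℤ → ℝ≥0 := fun i => ‖u i‖₊ * ρ ^ i with hg_def
  by_contra hcon
  push_neg at hcon
  obtain ⟨k₁, hk₁c, hk₁0⟩ := hcon
  have ht0 : 0 < g k₁ := mul_pos (by simpa using hk₁0) (zpow_pos hρ0 _)
  have hfin : {i : ℤ | g k₁ ≤ g i}.Finite := by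
    have hev := htends.eventually_lt_const ht0
    rw [Filter.eventually_cofinite] at hev
    convert hev using 1
    ext i
    simp [not_lt, hg_def]
  set S : Set ℤ := {i : ℤ | g k₁ ≤ g i ∧ c - p < i} with hS_def
  have hSfin : S.Finite := hfin.subset fun i hi => hi.1
  have hSne : S.Nonempty := ⟨k₁, le_rfl, hk₁c⟩
  obtain ⟨k₂, hk₂S, hk₂max⟩ := Set.Finite.exists_maximalFor g S hSfin hSne
  have hgmax : ∀ j, c - p < j → g j ≤ g k₂ := by
    intro j hj
    rcases le_or_gt (g k₁) (g j) with hle | hlt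
    · rcases le_or_gt (g j) (g k₂) with h | h
      · exact h
      · exact (hk₂max (j := j) ⟨hle, hj⟩ h.le).ge
    · exact hlt.le.trans (by
        rcases le_or_gt (g k₁) (g k₂) with h | h
        · exact h
        · exact (hk₂max (j := k₁) ⟨le_rfl, hk₁c⟩ h.le).ge)
  have hk₂c : c - p < k₂ := hk₂S.2
  have hgk₂ : 0 < g k₂ := lt_of_lt_of_le ht0 (hgmax k₁ hk₁c)
  have huk₂ : u k₂ ≠ 0 := by
    intro h0
    rw [hg_def] at hgk₂
    simp [h0] at hgk₂
  have hsum := hmul (k₂ + p)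
  have hzero : h (k₂ + p) = 0 := hh _ (by omega)
  have hsupp : ∀ j ∉ Finset.Icc k₂ (k₂ + p - 1), u j * frobT (L := L) p (k₂ + p - j) = 0 := by
    intro j hj
    rw [Finset.mem_Icc, not_and_or, not_le, not_le] at hj
    rw [frobT_eq_zero (by omega : (k₂ + p - j) < 1 ∨ (p : ℤ) < (k₂ + p - j))]
    · ring
  have hfs := hasSum_sum_of_ne_finset_zero (L := SummationFilter.unconditional ℤ) hsupp
  have heq : (0 : L) = ∑ j ∈ Finset.Icc k₂ (k₂ + p - 1), u j * frobT (L := L) p (k₂ + p - j) := by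
    rw [← hzero]
    exact hsum.unique hfs
  have hmem : k₂ ∈ Finset.Icc k₂ (k₂ + p - 1) := by
    rw [Finset.mem_Icc]
    omega
  rw [← Finset.add_sum_erase _ _ hmem] at heq
  have hself : u k₂ * frobT (L := L) p (k₂ + p - k₂) = u k₂ := by
    rw [show k₂ + (p : ℤ) - k₂ = (p : ℤ) by ring, frobT_self (by omega), mul_one]
  rw [hself] at heq
  have huk : u k₂ = -∑ j ∈ (Finset.Icc k₂ (k₂ + p - 1)).erase k₂,
      u j * frobT (L := L) p (k₂ + p - j) := eq_neg_of_add_eq_zero_left heq.symm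
  set C : ℝ≥0 := a * g k₂ * ρ ^ ((1 : ℤ) - p) * ρ ^ (-k₂) with hC_def
  have hbound : ‖u k₂‖₊ ≤ C := by
    rw [huk, nnnorm_neg]
    apply IsUltrametricDist.nnnorm_sum_le_of_forall_le
    intro j hj
    have hj1 : k₂ + 1 ≤ j ∧ j ≤ k₂ + p - 1 := by
      rw [Finset.mem_erase, Finset.mem_Icc] at hj
      omega
    have hfb : ‖frobT (L := L) p (k₂ + p - j)‖₊ ≤ a :=
      norm_frobT_le hp (by omega)
    have hub : ‖u j‖₊ ≤ g k₂ * ρ ^ (-j) := by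
      have := hgmax j (by omega)
      rw [hg_def] at this
      calc ‖u j‖₊ = (‖u j‖₊ * ρ ^ j) * ρ ^ (-j) := by
            rw [mul_assoc, ← zpow_add₀ hρ0.ne', add_neg_cancel, zpow_zero, mul_one]
        _ ≤ g k₂ * ρ ^ (-j) := mul_le_mul_left this _
    calc ‖u j * frobT (L := L) p (k₂ + p - j)‖₊ = ‖u j‖₊ * ‖frobT (L := L) p (k₂ + p - j)‖₊ :=
          nnnorm_mul _ _
      _ ≤ (g k₂ * ρ ^ (-j)) * a := mul_le_mul' hub hfb
      _ ≤ (g k₂ * (ρ ^ ((1 : ℤ) - p) * ρ ^ (-k₂))) * a := by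
          apply mul_le_mul_left
          apply mul_le_mul_right
          rw [← zpow_add₀ hρ0.ne']
          exact zpow_le_zpow_right_of_le_one₀ hρ0 hρ1.le (by omega)
      _ = C := by rw [hC_def]; ring
  have hfinal : g k₂ ≤ (a * ρ ^ ((1 : ℤ) - p)) * g k₂ := by
    calc g k₂ = ‖u k₂‖₊ * ρ ^ k₂ := rfl
      _ ≤ C * ρ ^ k₂ := mul_le_mul_left hbound _
      _ = (a * ρ ^ ((1 : ℤ) - p)) * g k₂ := by
          have hcan : ρ ^ (-k₂) * ρ ^ k₂ = 1 := by
            rw [← zpow_add₀ hρ0.ne', neg_add_cancel, zpow_zero]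
          calc C * ρ ^ k₂ = a * g k₂ * ρ ^ ((1 : ℤ) - p) * (ρ ^ (-k₂) * ρ ^ k₂) := by
                rw [hC_def]; ring
            _ = (a * ρ ^ ((1 : ℤ) - p)) * g k₂ := by rw [hcan]; ring
  have hlt : a * ρ ^ ((1 : ℤ) - p) < 1 := by
    have h6 : a * ρ ^ ((1 : ℤ) - p) < ρ ^ ((p : ℤ) - 1) * ρ ^ ((1 : ℤ) - p) :=
      mul_lt_mul_of_pos_right hkey (zpow_pos hρ0 _)
    rwa [← zpow_add₀ hρ0.ne', show ((p : ℤ) - 1) + ((1 : ℤ) - p) = 0 by ring, zpow_zero] at h6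
  have hcontra : g k₂ < g k₂ := by
    calc g k₂ ≤ (a * ρ ^ ((1 : ℤ) - p)) * g k₂ := hfinal
      _ < 1 * g k₂ := mul_lt_mul_of_pos_right hlt hgk₂
      _ = g k₂ := one_mul _
  exact absurd hcontra (lt_irrefl _)

theorem H1_map_injective
    [IsUltrametricDist L] [CompleteSpace L] [CharZero L]
    (p : ℕ) (hp : p.Prime) (hpL : ‖(p : L)‖ < 1)
    -- the subfield `ℚ_p ⊆ L`
    (K0 : Subfield L) (hK0closed : IsClosed (K0 : Set L))
    -- `SP i` = the `i`-th convolution power `S^i` of `S = (1+T)^p − 1`, for `i ∈ ℤ`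
    (SP : ℤ → (ℤ → L)) (hSP0 : SP 0 = laurentOne)
    (hSPmul : ∀ i : ℤ, IsLaurentMul (SP i) (frobT p) (SP (i + 1)))
    (hSProb : ∀ i : ℤ, MemRobba (SP i))
    (hSPK0 : ∀ i k, SP i k ∈ K0)
    -- `f ∈ R_L` and `g = (p²φ − 1)f`
    (f : ℤ → L) (hf : MemRobba f)
    (φf : ℤ → L) (hφf : ∀ k : ℤ, HasSum (fun i : ℤ => f i * SP i k) (φf k))
    (hg : ∀ k : ℤ, (p : L) ^ 2 * φf k - f k ∈ K0) :
    -- conclusion: `f ∈ R_{ℚ_p}`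
    ∀ k : ℤ, f k ∈ K0 := by
  have hp2 : 2 ≤ p := hp.two_le
  -- positive support and diagonal
  have hpos : ∀ n : ℕ, (∀ k : ℤ, k < (n : ℤ) → SP (n : ℤ) k = 0) ∧
      SP (n : ℤ) (n : ℤ) = (p : L) ^ n := by
    intro n
    induction n with
    | zero =>
      constructor
      · intro k hk
        simp only [Nat.cast_zero] at hk ⊢
        rw [hSP0]
        unfold laurentOne
        rw [if_neg (by omega)]
      · simp only [Nat.cast_zero]
        rw [hSP0]
        unfold laurentOne
        simp
    | succ n ih =>
      obtain ⟨ih1, ih2⟩ := ih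
      have hmuln := hSPmul (n : ℤ)
      constructor
      · intro k hk
        push_cast at hk ⊢
        have hs := hmuln k
        have hz : (fun j : ℤ => SP (n : ℤ) j * frobT (L := L) p (k - j)) = fun _ => 0 := by
          funext j
          rcases lt_or_ge j (n : ℤ) with h | h
          · rw [ih1 j h, zero_mul]
          · rw [frobT_eq_zero (Or.inl (by omega)), mul_zero]
        rw [hz] at hs
        exact hs.unique hasSum_zero
      · push_cast
        have hs := hmuln ((n : ℤ) + 1)
        have hsupp : ∀ j ∉ ({(n : ℤ)} : Finset ℤ),
            SP (n : ℤ) j * frobT (L := L) p ((n : ℤ) + 1 - j) = 0 := by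
          intro j hj
          rw [Finset.mem_singleton] at hj
          rcases lt_or_ge j (n : ℤ) with h | h
          · rw [ih1 j h, zero_mul]
          · rw [frobT_eq_zero (Or.inl (by omega)), mul_zero]
        have hfs := hasSum_sum_of_ne_finset_zero (L := SummationFilter.unconditional ℤ) hsupp
        have h9 := hs.unique hfs
        rw [h9, Finset.sum_singleton,
          show (n : ℤ) + 1 - (n : ℤ) = 1 by ring, frobT_one (by omega), ih2]
        ring
  -- negative support
  have hneg : ∀ n : ℕ, ∀ k : ℤ, -((p : ℤ) * n) < k → SP (-(n : ℤ)) k = 0 := by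
    intro n
    induction n with
    | zero =>
      intro k hk
      simp only [Nat.cast_zero, neg_zero, hSP0]
      unfold laurentOne
      rw [if_neg (by omega)]
    | succ n ih =>
      have hmuln := hSPmul (-(n : ℤ) - 1)
      rw [show (-(n : ℤ) - 1 + 1) = -(n : ℤ) by ring] at hmuln
      have hv := vanish_aux p hp hpL (SP (-(n : ℤ) - 1)) (SP (-(n : ℤ)))
        (hSProb _) hmuln (-((p : ℤ) * n)) ih
      intro k hk
      rw [show (-((n + 1 : ℕ) : ℤ)) = -(n : ℤ) - 1 by push_cast; ring]
      apply hv
      have hexp : ((p : ℤ) * (((n + 1 : ℕ)) : ℤ)) = (p : ℤ) * n + p := by push_cast; ring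
      omega
  -- integer-indexed versions
  have hposZ : ∀ i : ℤ, 0 ≤ i → ∀ k : ℤ, k < i → SP i k = 0 := by
    intro i hi k hk
    have hi' : ((i.toNat : ℕ) : ℤ) = i := Int.toNat_of_nonneg hi
    rw [← hi']
    exact (hpos i.toNat).1 k (by omega)
  have hdiagZ : ∀ i : ℤ, 0 ≤ i → SP i i = (p : L) ^ i.toNat := by
    intro i hi
    have hi' : ((i.toNat : ℕ) : ℤ) = i := Int.toNat_of_nonneg hi
    rw [← hi']
    exact (hpos i.toNat).2
  have hnegZ : ∀ i : ℤ, i < 0 → ∀ k : ℤ, (p : ℤ) * i < k → SP i k = 0 := by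
    intro i hi k hk
    have hi' : (((-i).toNat : ℕ) : ℤ) = -i := Int.toNat_of_nonneg (by omega)
    rw [show i = -(((-i).toNat : ℕ) : ℤ) by omega]
    apply hneg
    rw [hi']
    have h9 : (p : ℤ) * -i = -((p : ℤ) * i) := by ring
    omega
  have hpK0 : (p : L) ∈ K0 := natCast_mem K0 p
  -- the inductive step
  have step : ∀ k : ℤ, (∀ i : ℤ, i.natAbs < k.natAbs → f i ∈ K0) → f k ∈ K0 := by
    intro k hind
    rcases le_or_gt 0 k with hk0 | hk0
    · -- nonnegative case
      have hsupp : ∀ i ∉ Finset.Icc (0 : ℤ) k, f i * SP i k = 0 := by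
        intro i hi
        rw [Finset.mem_Icc, not_and_or, not_le, not_le] at hi
        rcases hi with hi | hi
        · have hn : (p : ℤ) * i < k := by
            have h2i : (p : ℤ) * i ≤ 2 * i := by
              have : (2 : ℤ) ≤ (p : ℤ) := by exact_mod_cast hp2
              nlinarith
            omega
          rw [hnegZ i hi k hn, mul_zero]
        · rw [hposZ i (by omega) k hi, mul_zero]
      have hfs := hasSum_sum_of_ne_finset_zero (L := SummationFilter.unconditional ℤ) hsupp
      have heqφ : φf k = ∑ i ∈ Finset.Icc (0 : ℤ) k, f i * SP i k := (hφf k).unique hfs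
      have hmem : k ∈ Finset.Icc (0 : ℤ) k := by rw [Finset.mem_Icc]; omega
      rw [← Finset.add_sum_erase _ _ hmem] at heqφ
      rw [hdiagZ k hk0] at heqφ
      set s : L := ∑ i ∈ (Finset.Icc (0 : ℤ) k).erase k, f i * SP i k with hs_def
      have hsK0 : s ∈ K0 := by
        apply Subfield.sum_mem
        intro i hi
        rw [Finset.mem_erase, Finset.mem_Icc] at hi
        exact Subfield.mul_mem K0 (hind i (by omega)) (hSPK0 i k)
      set c : L := (p : L) ^ 2 * (p : L) ^ k.toNat - 1 with hc_def
      have hcK0 : c ∈ K0 :=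
        Subfield.sub_mem K0 (Subfield.mul_mem K0 (Subfield.pow_mem K0 hpK0 2)
          (Subfield.pow_mem K0 hpK0 k.toNat)) (Subfield.one_mem K0)
      have hc0 : c ≠ 0 := by
        rw [hc_def]
        intro h0
        have h1 : (p : L) ^ 2 * (p : L) ^ k.toNat = 1 := by linear_combination h0
        have h2 : ‖(p : L) ^ 2 * (p : L) ^ k.toNat‖ < 1 := by
          rw [← pow_add, norm_pow]
          exact pow_lt_one₀ (norm_nonneg _) hpL (by omega)
        rw [h1, norm_one] at h2
        exact absurd h2 (lt_irrefl _)
      have hck : c * f k ∈ K0 := by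
        have he : c * f k = ((p : L) ^ 2 * φf k - f k) - (p : L) ^ 2 * s := by
          rw [heqφ, hc_def]
          ring
        rw [he]
        exact Subfield.sub_mem K0 (hg k)
          (Subfield.mul_mem K0 (Subfield.pow_mem K0 hpK0 2) hsK0)
      have : f k = c⁻¹ * (c * f k) := by
        rw [inv_mul_cancel_left₀ hc0]
      rw [this]
      exact Subfield.mul_mem K0 (Subfield.inv_mem K0 hcK0) hck
    · -- negative case
      have hsupp : ∀ i ∉ Finset.Icc (k + 1) (-1 : ℤ), f i * SP i k = 0 := by
        intro i hi
        rw [Finset.mem_Icc, not_and_or, not_le, not_le] at hi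
        rcases hi with hi | hi
        · -- i ≤ k
          have hi0 : i < 0 := by omega
          have hn : ¬ ((p : ℤ) * i < k) → False := by
            intro hcon
            push_neg at hcon
            have h2i : (p : ℤ) * i ≤ 2 * i := by
              have : (2 : ℤ) ≤ (p : ℤ) := by exact_mod_cast hp2
              nlinarith
            omega
          rw [hnegZ i hi0 k (by by_contra hcon; exact hn hcon), mul_zero]
        · -- i ≥ 0
          rw [hposZ i (by omega) k (by omega), mul_zero]
      have hfs := hasSum_sum_of_ne_finset_zero (L := SummationFilter.unconditional ℤ) hsupp
      have heqφ : φf k = ∑ i ∈ Finset.Icc (k + 1) (-1 : ℤ), f i * SP i k := (hφf k).unique hfs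
      have hφK0 : φf k ∈ K0 := by
        rw [heqφ]
        apply Subfield.sum_mem
        intro i hi
        rw [Finset.mem_Icc] at hi
        exact Subfield.mul_mem K0 (hind i (by omega)) (hSPK0 i k)
      have he : f k = (p : L) ^ 2 * φf k - ((p : L) ^ 2 * φf k - f k) := by ring
      rw [he]
      exact Subfield.sub_mem K0
        (Subfield.mul_mem K0 (Subfield.pow_mem K0 hpK0 2) hφK0) (hg k)
  -- strong induction on |k|
  suffices H : ∀ N : ℕ, ∀ k : ℤ, k.natAbs ≤ N → f k ∈ K0 by
    intro k
    exact H k.natAbs k le_rfl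
  intro N
  induction N with
  | zero =>
    intro k hk
    exact step k (by intro i hi; omega)
  | succ n ih =>
    intro k hk
    rcases Nat.lt_or_ge k.natAbs (n + 1) with h | h
    · exact ih k (by omega)
    · exact step k (by intro i hi; exact ih i (by omega))
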